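/- Let G be a non-abelian finite p-group. Then G is minimal non-abelian if and only if G is 2-generated and |G'| = p. -/

import Mathlib

open Subgroup MulAction
open scoped commutatorElement

set_option linter.unusedSectionVars false



section Aux
variable {G : Type*} [Group G]

private lemma commMulLeft (g₁ g₂ h : G) : ⁅g₁ * g₂, h⁆ = g₁ * ⁅g₂, h⁆ * g₁⁻¹ * ⁅g₁, h⁆ := by
  simp only [commutatorElement_def]; group

private lemma commMulRight (g h₁ h₂ : G) : ⁅g, h₁ * h₂⁆ = ⁅g, h₁⁆ * (h₁ * ⁅g, h₂⁆ * h₁⁻¹) := by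
  simp only [commutatorElement_def]; group

private lemma commInvLeft (g h : G) : ⁅g⁻¹, h⁆ = g⁻¹ * ⁅g, h⁆⁻¹ * g⁻¹⁻¹ := by
  simp only [commutatorElement_def]; group

private lemma commInvRight (g h : G) : ⁅g, h⁻¹⁆ = h⁻¹ * ⁅g, h⁆⁻¹ * h⁻¹⁻¹ := by
  simp only [commutatorElement_def]; group

private lemma commPowLeft {a b : G} (hc : ⁅a, b⁆ ∈ Subgroup.center G) :
    ∀ n : ℕ, ⁅a ^ n, b⁆ = ⁅a, b⁆ ^ n := by
  intro n
  induction n with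
  | zero => simp
  | succ n ih =>
    have h1 : ⁅a ^ (n + 1), b⁆ = a * ⁅a ^ n, b⁆ * a⁻¹ * ⁅a, b⁆ := by
      rw [pow_succ']; exact commMulLeft _ _ _
    rw [h1, ih, Subgroup.mem_center_iff.mp (pow_mem hc n) a, pow_succ]
    group

private lemma commutator_le_of_closure_pair {a b : G} (hab : Subgroup.closure {a, b} = ⊤)
    {W : Subgroup G} (hW : W.Normal) (hw : ⁅a, b⁆ ∈ W) : commutator G ≤ W := by
  rw [_root_.commutator_def, Subgroup.commutator_le]
  intro g₁ hg₁ g₂ hg₂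
  have h₁ : g₁ ∈ Subgroup.closure ({a, b} : Set G) := by rw [hab]; trivial
  have h₂ : g₂ ∈ Subgroup.closure ({a, b} : Set G) := by rw [hab]; trivial
  refine Subgroup.closure_induction₂ (p := fun x y _ _ => ⁅x, y⁆ ∈ W) ?_ ?_ ?_ ?_ ?_ ?_ ?_ h₁ h₂
  · rintro x y (rfl | rfl) (rfl | rfl)
    · simp [commutatorElement_self, W.one_mem]
    · exact hw
    · rw [← commutatorElement_inv]; exact inv_mem hw
    · simp [commutatorElement_self, W.one_mem]
  · intro x _; simp [commutatorElement_one_left, W.one_mem]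
  · intro x _; simp [commutatorElement_one_right, W.one_mem]
  · intro x y z _ _ _ hxz hyz
    rw [commMulLeft]
    exact mul_mem (hW.conj_mem _ hyz x) hxz
  · intro y z x _ _ _ hxy hxz
    rw [commMulRight]
    exact mul_mem hxy (hW.conj_mem _ hxz y)
  · intro x y _ _ hxy
    rw [commInvLeft]
    exact hW.conj_mem _ (inv_mem hxy) x⁻¹
  · intro x y _ _ hxy
    rw [commInvRight]
    exact hW.conj_mem _ (inv_mem hxy) y⁻¹

end Aux


section Aux2
variable {G : Type*} [Group G] [Finite G] {p : ℕ}

private lemma coatom_facts (hp : p.Prime) (hG : IsPGroup p G)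
    {M : Subgroup G} (hM : IsCoatom M) (hMn : M.Normal) :
    M.index = p ∧ (∀ g h : G, ⁅g, h⁆ ∈ M) ∧ (∀ g : G, g ^ p ∈ M) := by
  haveI : Fact p.Prime := ⟨hp⟩
  have hQp : IsPGroup p (G ⧸ M) := hG.to_quotient M
  -- get a nontrivial element of the quotient
  obtain ⟨g₀, hg₀⟩ : ∃ g₀ : G, g₀ ∉ M := by
    by_contra h
    push_neg at h
    exact hM.1 ((Subgroup.eq_top_iff' M).mpr h)
  have hq₀ : (QuotientGroup.mk g₀ : G ⧸ M) ≠ 1 := by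
    simpa [QuotientGroup.eq_one_iff] using hg₀
  -- an element of order p in the quotient
  obtain ⟨k, hk⟩ := (IsPGroup.iff_orderOf.mp hQp) (QuotientGroup.mk g₀ : G ⧸ M)
  have hk0 : k ≠ 0 := by
    rintro rfl
    simp only [pow_zero, orderOf_eq_one_iff] at hk
    exact hq₀ hk
  set r : G ⧸ M := (QuotientGroup.mk g₀ : G ⧸ M) ^ p ^ (k - 1) with hr
  have hrp : r ^ p = 1 := by
    rw [hr, ← pow_mul, ← pow_succ, Nat.sub_add_cancel (Nat.one_le_iff_ne_zero.mpr hk0),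
      ← hk, pow_orderOf_eq_one]
  have hrne : r ≠ 1 := by
    intro h
    have := orderOf_dvd_of_pow_eq_one (h ▸ rfl : (QuotientGroup.mk g₀ : G ⧸ M) ^ p ^ (k - 1) = 1)
    rw [hk] at this
    have hlt := Nat.pow_lt_pow_right hp.one_lt (Nat.sub_lt (Nat.pos_of_ne_zero hk0) one_pos)
    exact absurd (Nat.le_of_dvd (pow_pos hp.pos _) this) (not_le.mpr hlt)
  have hror : orderOf r = p := orderOf_eq_prime hrp hrne
  -- zpowers r = ⊤ via the coatom property
  have hzp : Subgroup.zpowers r = ⊤ := by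
    obtain ⟨g₁, hg₁⟩ := QuotientGroup.mk_surjective r
    have hS : Subgroup.comap (QuotientGroup.mk' M) (Subgroup.zpowers r) = ⊤ := by
      refine hM.2 _ (lt_of_le_of_ne ?_ ?_)
      · intro m hm
        simp only [Subgroup.mem_comap, QuotientGroup.mk'_apply]
        have : (QuotientGroup.mk m : G ⧸ M) = 1 := (QuotientGroup.eq_one_iff m).mpr hm
        rw [this]; exact one_mem _
      · intro h
        apply hrne
        have hg₁S : g₁ ∈ Subgroup.comap (QuotientGroup.mk' M) (Subgroup.zpowers r) := by
          simp [Subgroup.mem_comap, hg₁, Subgroup.mem_zpowers]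
        rw [← h] at hg₁S
        have : (QuotientGroup.mk g₁ : G ⧸ M) = 1 := (QuotientGroup.eq_one_iff g₁).mpr hg₁S
        rw [← hg₁, this]
    refine le_antisymm le_top ?_
    have h1 : Subgroup.map (QuotientGroup.mk' M)
        (Subgroup.comap (QuotientGroup.mk' M) (Subgroup.zpowers r)) ≤ Subgroup.zpowers r :=
      Subgroup.map_comap_le _ _
    rwa [hS, Subgroup.map_top_of_surjective _ (QuotientGroup.mk'_surjective M)] at h1
  -- card of quotient is p
  have hcardQ : Nat.card (G ⧸ M) = p := by
    rw [← hror, ← Nat.card_zpowers, hzp]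
    exact Subgroup.card_top.symm
  have hidx : M.index = p := by rw [Subgroup.index_eq_card, hcardQ]
  haveI : IsCyclic (G ⧸ M) := isCyclic_of_prime_card hcardQ
  letI := IsCyclic.commGroup (α := G ⧸ M)
  refine ⟨hidx, fun g h => ?_, fun g => ?_⟩
  · rw [← QuotientGroup.eq_one_iff]
    have : (QuotientGroup.mk ⁅g, h⁆ : G ⧸ M) = ⁅(QuotientGroup.mk g : G ⧸ M), QuotientGroup.mk h⁆ :=
      map_commutatorElement (QuotientGroup.mk' M) g h
    rw [this, commutatorElement_eq_one_iff_mul_comm]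
    exact mul_comm _ _
  · rw [← QuotientGroup.eq_one_iff]
    have : (QuotientGroup.mk (g ^ p) : G ⧸ M) = (QuotientGroup.mk g : G ⧸ M) ^ p := rfl
    rw [this, ← hcardQ, pow_card_eq_one']

end Aux2


private lemma le_center_of_card_eq_p {G : Type*} [Group G] [Finite G] {p : ℕ}
    (hp : p.Prime) (hG : IsPGroup p G) {N : Subgroup G} (hNn : N.Normal)
    (hN : Nat.card N = p) : N ≤ Subgroup.center G := by
  haveI : Fact p.Prime := ⟨hp⟩
  -- conjugation action of ConjAct G on N
  have hCA : IsPGroup p (ConjAct G) := hG.of_equiv ConjAct.toConjAct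
  have hmod := hCA.card_modEq_card_fixedPoints (α := N)
  rw [hN] at hmod
  have hdvd : p ∣ Nat.card (fixedPoints (ConjAct G) N) :=
    Nat.modEq_zero_iff_dvd.mp (hmod.symm.trans (Nat.modEq_zero_iff_dvd.mpr dvd_rfl))
  have hone : (1 : N) ∈ fixedPoints (ConjAct G) N := by
    intro g
    apply Subtype.ext
    rw [ConjAct.Subgroup.val_conj_smul, ConjAct.smul_def]
    simp
  have hpos : 0 < Nat.card (fixedPoints (ConjAct G) N) :=
    Nat.card_pos_iff.mpr ⟨⟨⟨1, hone⟩⟩, Set.Finite.to_subtype (Set.toFinite _)⟩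
  -- every element of N is a fixed point
  have hfix : ∀ n : N, n ∈ fixedPoints (ConjAct G) N := by
    have hsub : fixedPoints (ConjAct G) N ⊆ Set.univ := Set.subset_univ _
    have := Set.eq_of_subset_of_ncard_le hsub ?hle (Set.toFinite _)
    · intro n; rw [this]; trivial
    case hle =>
      rw [Set.ncard_univ]
      calc Nat.card N = p := hN
        _ ≤ Nat.card (fixedPoints (ConjAct G) N) := Nat.le_of_dvd hpos hdvd
        _ = (fixedPoints (ConjAct G) N).ncard := (Nat.card_coe_set_eq _)
  intro n hn
  rw [Subgroup.mem_center_iff]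
  intro g
  have := hfix ⟨n, hn⟩ (ConjAct.toConjAct g)
  have h2 : g * n * g⁻¹ = n := by
    have := congrArg Subtype.val this
    rwa [ConjAct.Subgroup.val_conj_smul, ConjAct.smul_def,
      ConjAct.ofConjAct_toConjAct] at this
  calc g * n = g * n * g⁻¹ * g := by group
    _ = n * g := by rw [h2]




/-- A subgroup is minimal non-abelian if it is non-abelian and all its proper
subgroups are abelian. -/
def IsMinNonab (G : Type*) [Group G] (H : Subgroup G) : Prop :=
  ¬ IsMulCommutative H ∧ ∀ K : Subgroup G, K < H → IsMulCommutative K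

/-- A non-abelian finite `p`-group is minimal non-abelian iff `d(G) = 2` and `|G'| = p`. -/
theorem stmt8 {G : Type*} [Group G] [Finite G] (p : ℕ) (hp : p.Prime)
    (hG : IsPGroup p G) (hna : ¬ ∀ a b : G, a * b = b * a) :
    IsMinNonab G ⊤ ↔
      ((∃ a b : G, Subgroup.closure {a, b} = ⊤) ∧
       (¬ ∃ a : G, Subgroup.closure ({a} : Set G) = ⊤) ∧
       Nat.card (commutator G) = p) := by
  haveI : Fact p.Prime := ⟨hp⟩
  haveI : Group.IsNilpotent G := hG.isNilpotent
  have hNC : NormalizerCondition G := normalizerCondition_of_isNilpotent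
  push_neg at hna
  obtain ⟨a, b, hab⟩ := hna
  -- G is not cyclic
  have hnocyc : ∀ t : G, Subgroup.zpowers t ≠ ⊤ := by
    intro t ht
    apply hab
    have ha : a ∈ Subgroup.zpowers t := ht ▸ Subgroup.mem_top a
    have hb : b ∈ Subgroup.zpowers t := ht ▸ Subgroup.mem_top b
    obtain ⟨m, rfl⟩ := ha
    obtain ⟨n, rfl⟩ := hb
    rw [← zpow_add, add_comm, zpow_add]
  constructor
  · rintro ⟨_, hprop⟩
    -- the two noncommuting elements generate G
    have habtop : Subgroup.closure ({a, b} : Set G) = ⊤ := by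
      by_contra hne
      haveI := hprop _ (lt_of_le_of_ne le_top hne)
      exact hab (Subgroup.mul_comm_of_mem_isMulCommutative _
        (Subgroup.subset_closure (Set.mem_insert a {b}))
        (Subgroup.subset_closure (Set.mem_insert_of_mem a rfl)))
    refine ⟨⟨a, b, habtop⟩, ?_, ?_⟩
    · rintro ⟨t, ht⟩
      exact hnocyc t (by rw [Subgroup.zpowers_eq_closure]; exact ht)
    -- two distinct maximal subgroups
    obtain ⟨M, hM, haM⟩ := (eq_top_or_exists_le_coatom (Subgroup.zpowers a)).resolve_left
      (hnocyc a)
    obtain ⟨N, hN, hbN⟩ := (eq_top_or_exists_le_coatom (Subgroup.zpowers b)).resolve_left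
      (hnocyc b)
    have haM' : a ∈ M := haM (Subgroup.mem_zpowers a)
    have hbN' : b ∈ N := hbN (Subgroup.mem_zpowers b)
    have hMN : M ≠ N := by
      rintro rfl
      haveI := hprop M (lt_top_iff_ne_top.mpr hM.1)
      exact hab (Subgroup.mul_comm_of_mem_isMulCommutative _ haM' hbN')
    have hMn : M.Normal := NormalizerCondition.normal_of_coatom M hNC hM
    have hNn : N.Normal := NormalizerCondition.normal_of_coatom N hNC hN
    obtain ⟨hMidx, hMcomm, hMpow⟩ := coatom_facts hp hG hM hMn
    obtain ⟨hNidx, hNcomm, hNpow⟩ := coatom_facts hp hG hN hNn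
    have hsup : M ⊔ N = ⊤ := by
      rcases eq_or_lt_of_le (le_sup_left : M ≤ M ⊔ N) with h | h
      · exfalso
        have hNM : N ≤ M := h ▸ le_sup_right
        rcases eq_or_lt_of_le hNM with h2 | h2
        · exact hMN h2.symm
        · exact hM.1 (hN.2 M h2)
      · exact hM.2 _ h
    -- M ⊓ N is central
    have hZ : M ⊓ N ≤ Subgroup.center G := by
      intro g hg
      rw [Subgroup.mem_center_iff]
      intro h
      have hcen : (⊤ : Subgroup G) ≤ Subgroup.centralizer {g} := by
        rw [← hsup]
        haveI := hprop M (lt_top_iff_ne_top.mpr hM.1)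
        haveI := hprop N (lt_top_iff_ne_top.mpr hN.1)
        refine sup_le ?_ ?_
        · intro m hm
          rw [Subgroup.mem_centralizer_iff]
          rintro y rfl
          exact Subgroup.mul_comm_of_mem_isMulCommutative M hg.1 hm
        · intro m hm
          rw [Subgroup.mem_centralizer_iff]
          rintro y rfl
          exact Subgroup.mul_comm_of_mem_isMulCommutative N hg.2 hm
      have := hcen (Subgroup.mem_top h)
      rw [Subgroup.mem_centralizer_iff] at this
      exact (this g rfl).symm
    set c : G := ⁅a, b⁆ with hc
    have hc1 : c ≠ 1 := fun h => hab (commutatorElement_eq_one_iff_mul_comm.mp h)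
    have hcZ : c ∈ Subgroup.center G := hZ ⟨hMcomm a b, hNcomm a b⟩
    have hapZ : a ^ p ∈ Subgroup.center G := hZ ⟨pow_mem haM' p, hNpow a⟩
    have hcp : c ^ p = 1 := by
      rw [hc, ← commPowLeft hcZ p]
      exact commutatorElement_eq_one_iff_mul_comm.mpr
        ((Subgroup.mem_center_iff.mp hapZ b).symm)
    -- commutator G = zpowers c
    have hWn : (Subgroup.zpowers c).Normal := by
      constructor
      intro n hn g
      have hnZ : n ∈ Subgroup.center G := (Subgroup.zpowers_le.mpr hcZ) hn
      rw [Subgroup.mem_center_iff.mp hnZ g, mul_inv_cancel_right]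
      exact hn
    have hGW : commutator G = Subgroup.zpowers c := by
      refine le_antisymm (commutator_le_of_closure_pair habtop hWn (Subgroup.mem_zpowers c)) ?_
      rw [Subgroup.zpowers_le, _root_.commutator_def]
      exact Subgroup.commutator_mem_commutator (Subgroup.mem_top a) (Subgroup.mem_top b)
    rw [hGW, Nat.card_zpowers]
    rcases (Nat.Prime.eq_one_or_self_of_dvd hp _ (orderOf_dvd_of_pow_eq_one hcp)) with h | h
    · exact absurd (orderOf_eq_one_iff.mp h) hc1
    · exact h
  · rintro ⟨⟨x, y, hxytop⟩, hnotcyc, hcard⟩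
    -- x and y do not commute
    have hxy : x * y ≠ y * x := by
      intro heq
      have hcen : (⊤ : Subgroup G) ≤ Subgroup.centralizer ({x, y} : Set G) := by
        rw [← hxytop]
        refine (Subgroup.closure_le _).mpr ?_
        rintro w (rfl | rfl)
        · rw [SetLike.mem_coe, Subgroup.mem_centralizer_iff]
          rintro h (rfl | rfl)
          · rfl
          · exact heq.symm
        · rw [SetLike.mem_coe, Subgroup.mem_centralizer_iff]
          rintro h (rfl | rfl)
          · exact heq
          · rfl
      have hxZ : x ∈ Subgroup.center G := by
        rw [Subgroup.mem_center_iff]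
        intro g
        exact (Subgroup.mem_centralizer_iff.mp (hcen (Subgroup.mem_top g)) x
          (Set.mem_insert x {y})).symm
      have hyZ : y ∈ Subgroup.center G := by
        rw [Subgroup.mem_center_iff]
        intro g
        exact (Subgroup.mem_centralizer_iff.mp (hcen (Subgroup.mem_top g)) y
          (Set.mem_insert_of_mem x rfl)).symm
      have htopZ : (⊤ : Subgroup G) ≤ Subgroup.center G := by
        rw [← hxytop]
        exact (Subgroup.closure_le _).mpr (by rintro w (rfl | rfl) <;> assumption)
      exact hab (Subgroup.mem_center_iff.mp (htopZ (Subgroup.mem_top b)) a)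
    have hGPle : commutator G ≤ Subgroup.center G :=
      le_center_of_card_eq_p hp hG inferInstance hcard
    have hcomm_mem : ∀ g h : G, ⁅g, h⁆ ∈ commutator G := fun g h =>
      _root_.commutator_def G ▸ Subgroup.commutator_mem_commutator (Subgroup.mem_top g)
        (Subgroup.mem_top h)
    have hpowc : ∀ g h : G, ⁅g, h⁆ ^ p = 1 := by
      intro g h
      have h1 : (⟨⁅g, h⁆, hcomm_mem g h⟩ : commutator G) ^ p = 1 := by
        have h2 : (⟨⁅g, h⁆, hcomm_mem g h⟩ : commutator G) ^ Nat.card (commutator G) = 1 :=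
          pow_card_eq_one'
        rwa [hcard] at h2
      have := congrArg Subtype.val h1
      simpa using this
    have hpZ : ∀ g : G, g ^ p ∈ Subgroup.center G := by
      intro g
      rw [Subgroup.mem_center_iff]
      intro h
      have h1 : ⁅g ^ p, h⁆ = 1 := by
        rw [commPowLeft (hGPle (hcomm_mem g h)) p]; exact hpowc g h
      exact (commutatorElement_eq_one_iff_mul_comm.mp h1).symm
    -- kernels of the commutation homomorphisms have index p
    have key : ∀ u v : G, ⁅u, v⁆ ≠ 1 →
        ∃ Ku : Subgroup G, Ku.index = p ∧ ∀ g : G, g ∈ Ku ↔ ⁅u, g⁆ = 1 := by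
      intro u v huv
      have hmul : ∀ g h : G, (⁅u, g * h⁆ : G) = ⁅u, g⁆ * ⁅u, h⁆ := by
        intro g h
        rw [commMulRight, Subgroup.mem_center_iff.mp (hGPle (hcomm_mem u h)) g,
          mul_inv_cancel_right]
      set f : G →* commutator G := MonoidHom.mk' (fun g => ⟨⁅u, g⁆, hcomm_mem u g⟩)
        (fun g h => Subtype.ext (hmul g h)) with hf
      refine ⟨f.ker, ?_, ?_⟩
      · rw [Subgroup.index_ker]
        have hdvd : Nat.card f.range ∣ p := hcard ▸ Subgroup.card_subgroup_dvd_card f.range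
        rcases hp.eq_one_or_self_of_dvd _ hdvd with h | h
        · exfalso
          have hbot : f.range = ⊥ := Subgroup.card_eq_one.mp h
          have hv : f v ∈ f.range := ⟨v, rfl⟩
          rw [hbot, Subgroup.mem_bot] at hv
          exact huv (by simpa [hf] using congrArg Subtype.val hv)
        · exact h
      · intro g
        rw [MonoidHom.mem_ker, hf]
        constructor
        · intro h; simpa using congrArg Subtype.val h
        · intro h; exact Subtype.ext (by simpa using h)
    have hxyne : ⁅x, y⁆ ≠ 1 := fun h => hxy (commutatorElement_eq_one_iff_mul_comm.mp h)
    have hyxne : ⁅y, x⁆ ≠ 1 := fun h => hxy (commutatorElement_eq_one_iff_mul_comm.mp h).symm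
    obtain ⟨Ka, hKaidx, hKamem⟩ := key x y hxyne
    obtain ⟨Kb, hKbidx, hKbmem⟩ := key y x hyxne
    have hxKa : x ∈ Ka := (hKamem x).mpr (commutatorElement_self x)
    have hxKb : x ∉ Kb := fun h => hyxne ((hKbmem x).mp h)
    have hKanb : ¬Ka ≤ Kb := fun h => hxKb (h hxKa)
    -- the intersection has index at least p^2
    have hrne1 : (Ka ⊓ Kb).relIndex Ka ≠ 1 := by
      rw [Subgroup.inf_relIndex_left]
      intro h1
      have h2 : (Kb.subgroupOf Ka).index = 1 := h1
      exact hKanb (Subgroup.subgroupOf_eq_top.mp (Subgroup.index_eq_one.mp h2))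
    have hrp : p ∣ (Ka ⊓ Kb).relIndex Ka := by
      obtain ⟨n, hn⟩ := IsPGroup.iff_card.mp hG
      have hd1 : (Ka ⊓ Kb).relIndex Ka ∣ Nat.card Ka :=
        Subgroup.index_dvd_card ((Ka ⊓ Kb).subgroupOf Ka)
      have hd2 : Nat.card Ka ∣ p ^ n := hn ▸ Subgroup.card_subgroup_dvd_card Ka
      obtain ⟨j, hjn, hj⟩ := (Nat.dvd_prime_pow hp).mp (hd1.trans hd2)
      rcases Nat.eq_zero_or_pos j with rfl | hjpos
      · exfalso; rw [pow_zero] at hj; exact hrne1 hj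
      · rw [hj]
        exact dvd_pow_self p (Nat.pos_iff_ne_zero.mp hjpos)
    have hinfidx : p * p ≤ (Ka ⊓ Kb).index := by
      have heq := Subgroup.relIndex_mul_index (inf_le_left : Ka ⊓ Kb ≤ Ka)
      rw [hKaidx] at heq
      rw [← heq]
      have hrpos : 0 < (Ka ⊓ Kb).relIndex Ka :=
        Nat.pos_of_ne_zero (Subgroup.index_ne_zero_of_finite)
      exact Nat.mul_le_mul (Nat.le_of_dvd hrpos hrp) le_rfl
    have hcen_le : Subgroup.center G ≤ Ka ⊓ Kb := by
      intro z hz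
      refine ⟨(hKamem z).mpr ?_, (hKbmem z).mpr ?_⟩
      · exact commutatorElement_eq_one_iff_mul_comm.mpr (Subgroup.mem_center_iff.mp hz x)
      · exact commutatorElement_eq_one_iff_mul_comm.mpr (Subgroup.mem_center_iff.mp hz y)
    -- the Frattini-like subgroup
    set Φ : Subgroup G := commutator G ⊔ Subgroup.closure {w : G | ∃ g : G, g ^ p = w} with hΦ
    have hΦle : Φ ≤ Subgroup.center G := by
      refine sup_le hGPle ((Subgroup.closure_le _).mpr ?_)
      rintro w ⟨g, rfl⟩
      exact hpZ g
    have hΦn : Φ.Normal := by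
      constructor
      intro n hn g
      rw [Subgroup.mem_center_iff.mp (hΦle hn) g, mul_inv_cancel_right]
      exact hn
    haveI := hΦn
    have hQcomm : ∀ q s : G ⧸ Φ, q * s = s * q := by
      intro q s
      obtain ⟨g, rfl⟩ := QuotientGroup.mk_surjective q
      obtain ⟨h, rfl⟩ := QuotientGroup.mk_surjective s
      rw [← commutatorElement_eq_one_iff_mul_comm]
      have h2 : (QuotientGroup.mk ⁅g, h⁆ : G ⧸ Φ) =
          ⁅(QuotientGroup.mk g : G ⧸ Φ), (QuotientGroup.mk h : G ⧸ Φ)⁆ :=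
        map_commutatorElement (QuotientGroup.mk' Φ) g h
      rw [← h2, QuotientGroup.eq_one_iff]
      exact (le_sup_left : commutator G ≤ Φ) (hcomm_mem g h)
    have hmkpow : ∀ g : G, (QuotientGroup.mk g : G ⧸ Φ) ^ p = 1 := by
      intro g
      have h1 : (QuotientGroup.mk (g ^ p) : G ⧸ Φ) = 1 :=
        (QuotientGroup.eq_one_iff _).mpr
          ((le_sup_right : Subgroup.closure {w : G | ∃ g : G, g ^ p = w} ≤ Φ)
            (Subgroup.subset_closure ⟨g, rfl⟩))
      simpa using h1
    have hQgen : Subgroup.zpowers (QuotientGroup.mk x : G ⧸ Φ) ⊔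
        Subgroup.zpowers (QuotientGroup.mk y : G ⧸ Φ) = ⊤ := by
      rw [eq_top_iff]
      intro q _
      obtain ⟨g, rfl⟩ := QuotientGroup.mk_surjective q
      have hg : g ∈ Subgroup.closure ({x, y} : Set G) := by rw [hxytop]; trivial
      refine Subgroup.closure_induction
        (p := fun w _ => (QuotientGroup.mk w : G ⧸ Φ) ∈
          Subgroup.zpowers (QuotientGroup.mk x : G ⧸ Φ) ⊔
          Subgroup.zpowers (QuotientGroup.mk y : G ⧸ Φ)) ?_ ?_ ?_ ?_ hg
      · rintro w (rfl | rfl)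
        · exact Subgroup.mem_sup_left (Subgroup.mem_zpowers _)
        · exact Subgroup.mem_sup_right (Subgroup.mem_zpowers _)
      · exact one_mem _
      · intro u v _ _ hu hv
        exact mul_mem hu hv
      · intro u _ hu
        exact inv_mem hu
    have hΦidx : Φ.index ≤ p * p := by
      rw [Subgroup.index_eq_card]
      have hsurj : Function.Surjective
          (fun z : (Subgroup.zpowers (QuotientGroup.mk x : G ⧸ Φ)) ×
            (Subgroup.zpowers (QuotientGroup.mk y : G ⧸ Φ)) => (z.1 : G ⧸ Φ) * z.2) := by
        intro q
        have hq : q ∈ Subgroup.zpowers (QuotientGroup.mk x : G ⧸ Φ) ⊔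
            Subgroup.zpowers (QuotientGroup.mk y : G ⧸ Φ) := by rw [hQgen]; trivial
        letI : CommGroup (G ⧸ Φ) :=
          { (inferInstance : Group (G ⧸ Φ)) with mul_comm := hQcomm }
        obtain ⟨u, hu, v, hv, huv⟩ := Subgroup.mem_sup.mp hq
        exact ⟨(⟨u, hu⟩, ⟨v, hv⟩), huv⟩
      have h1 := Nat.card_le_card_of_surjective _ hsurj
      rw [Nat.card_prod] at h1
      refine h1.trans (Nat.mul_le_mul ?_ ?_)
      · rw [Nat.card_zpowers]
        exact Nat.le_of_dvd hp.pos (orderOf_dvd_of_pow_eq_one (hmkpow x))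
      · rw [Nat.card_zpowers]
        exact Nat.le_of_dvd hp.pos (orderOf_dvd_of_pow_eq_one (hmkpow y))
    -- all the indices collapse
    have hd1 : (Ka ⊓ Kb).index ∣ (Subgroup.center G).index :=
      Subgroup.index_dvd_of_le hcen_le
    have hd2 : (Subgroup.center G).index ∣ Φ.index := Subgroup.index_dvd_of_le hΦle
    have hΦpos : 0 < Φ.index := Nat.pos_of_ne_zero Subgroup.index_ne_zero_of_finite
    have hZpos : 0 < (Subgroup.center G).index :=
      Nat.pos_of_ne_zero Subgroup.index_ne_zero_of_finite
    have hchain1 : (Ka ⊓ Kb).index ≤ (Subgroup.center G).index := Nat.le_of_dvd hZpos hd1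
    have hchain2 : (Subgroup.center G).index ≤ Φ.index := Nat.le_of_dvd hΦpos hd2
    have hiZ : (Subgroup.center G).index = p * p :=
      le_antisymm (hchain2.trans hΦidx) (hinfidx.trans hchain1)
    have hiΦ : Φ.index = p * p :=
      le_antisymm hΦidx ((hinfidx.trans hchain1).trans hchain2)
    have hΦeq : Φ = Subgroup.center G := by
      have hc1 : Nat.card Φ * Φ.index = Nat.card G := Subgroup.card_mul_index _
      have hc2 : Nat.card (Subgroup.center G) * (Subgroup.center G).index = Nat.card G :=
        Subgroup.card_mul_index _
      rw [hiΦ] at hc1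
      rw [hiZ] at hc2
      have hcards : Nat.card Φ = Nat.card (Subgroup.center G) :=
        Nat.eq_of_mul_eq_mul_right (Nat.mul_pos hp.pos hp.pos) (hc1.trans hc2.symm)
      exact Subgroup.eq_of_le_of_card_ge hΦle hcards.ge
    refine ⟨fun hcomm => ?_, fun K hK => ?_⟩
    · haveI := hcomm
      exact hab (Subgroup.mul_comm_of_mem_isMulCommutative ⊤ (Subgroup.mem_top a)
        (Subgroup.mem_top b))
    · obtain ⟨M, hM, hKM⟩ := (eq_top_or_exists_le_coatom K).resolve_left (ne_of_lt hK)
      have hMn : M.Normal := NormalizerCondition.normal_of_coatom M hNC hM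
      obtain ⟨hMidx, hMcomm', hMpow⟩ := coatom_facts hp hG hM hMn
      have hcenM : Subgroup.center G ≤ M := by
        rw [← hΦeq]
        refine sup_le ?_ ((Subgroup.closure_le _).mpr ?_)
        · rw [_root_.commutator_def, Subgroup.commutator_le]
          exact fun g _ h _ => hMcomm' g h
        · rintro w ⟨g, rfl⟩
          exact hMpow g
      set f : ↥M →* G ⧸ Subgroup.center G :=
        (QuotientGroup.mk' (Subgroup.center G)).comp M.subtype with hfM
      have hkerf : f.ker = (Subgroup.center G).subgroupOf M := by
        ext m
        simp [hfM, MonoidHom.mem_ker, QuotientGroup.eq_one_iff, Subgroup.mem_subgroupOf]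
      have hkerle : f.ker ≤ Subgroup.center ↥M := by
        intro m hm
        rw [hkerf, Subgroup.mem_subgroupOf] at hm
        rw [Subgroup.mem_center_iff]
        intro u
        exact Subtype.ext (Subgroup.mem_center_iff.mp hm u)
      have hrange : Nat.card f.range = p := by
        have h1 : Nat.card ↥M = Nat.card (↥M ⧸ f.ker) * Nat.card f.ker :=
          Subgroup.card_eq_card_quotient_mul_card_subgroup f.ker
        have h1' : Nat.card (↥M ⧸ f.ker) = Nat.card f.range :=
          Nat.card_congr (QuotientGroup.quotientKerEquivRange f).toEquiv
        have h2 : Nat.card f.ker = Nat.card (Subgroup.center G) := by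
          rw [hkerf]
          exact Nat.card_congr (Subgroup.subgroupOfEquivOfLe hcenM).toEquiv
        have h3 : Nat.card ↥M * M.index = Nat.card G := Subgroup.card_mul_index _
        have h4 : Nat.card (Subgroup.center G) * (p * p) = Nat.card G := by
          rw [← hiZ]; exact Subgroup.card_mul_index _
        have h5 : Nat.card f.range * (Nat.card (Subgroup.center G) * p) =
            p * (Nat.card (Subgroup.center G) * p) := by
          calc Nat.card f.range * (Nat.card (Subgroup.center G) * p)
              = Nat.card (↥M ⧸ f.ker) * Nat.card f.ker * p := by rw [h1', h2]; ring
            _ = Nat.card ↥M * p := by rw [← h1]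
            _ = Nat.card G := by rw [← hMidx]; exact h3
            _ = p * (Nat.card (Subgroup.center G) * p) := by rw [← h4]; ring
        exact Nat.eq_of_mul_eq_mul_right (Nat.mul_pos Nat.card_pos hp.pos) h5
      haveI : IsCyclic f.range := isCyclic_of_prime_card hrange
      have hMcomm2 : ∀ u v : ↥M, u * v = v * u :=
        commutative_of_cyclic_center_quotient f.rangeRestrict
          (by rw [MonoidHom.ker_rangeRestrict]; exact hkerle)
      refine ⟨⟨fun u v => ?_⟩⟩
      have := hMcomm2 ⟨u, hKM u.2⟩ ⟨v, hKM v.2⟩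
      exact Subtype.ext (by simpa using congrArg Subtype.val this)
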